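/- For fixed real numbers e > f > 0, the function g(x) = (1 − x^{−e})/(1 − x^{−f}) is strictly decreasing on (1, ∞). -/

import Mathlib

theorem strictAntiOn_ratio (e f : ℝ) (hf : 0 < f) (hef : f < e) :
    StrictAntiOn (fun x : ℝ => (1 - x ^ (-e)) / (1 - x ^ (-f))) (Set.Ioi 1) := by
  have key : ∀ x : ℝ, 1 < x → e * (x ^ f - 1) < f * (x ^ e - 1) := by
    intro x hx
    have hx0 : (0:ℝ) < x := lt_trans one_pos hx
    have hxf : 1 < x ^ f := Real.one_lt_rpow_iff_of_pos hx0 |>.mpr (Or.inl ⟨hx, hf⟩)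
    have hp : 1 < e / f := (one_lt_div hf).mpr hef
    have hs : x ^ f - 1 ≠ 0 := by nlinarith
    have hb := one_add_mul_self_lt_rpow_one_add (by nlinarith : (-1:ℝ) ≤ x ^ f - 1) hs hp
    have hxe : (1 + (x ^ f - 1)) ^ (e / f) = x ^ e := by
      rw [show (1 + (x ^ f - 1)) = x ^ f by ring, ← Real.rpow_mul hx0.le]
      congr 1
      field_simp
    rw [hxe] at hb
    have h3 : (1 + e / f * (x ^ f - 1)) * f = f + e * (x ^ f - 1) := by
      field_simp
    nlinarith [mul_lt_mul_of_pos_right hb hf]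
  have hden : ∀ x : ℝ, 1 < x → 0 < 1 - x ^ (-f) := by
    intro x hx
    have := Real.rpow_lt_one_of_one_lt_of_neg hx (neg_lt_zero.mpr hf)
    linarith
  apply strictAntiOn_of_deriv_neg (convex_Ioi 1)
  · have hc : ∀ p : ℝ, ContinuousOn (fun x : ℝ => x ^ p) (Set.Ioi 1) := fun p =>
      ContinuousOn.rpow_const continuousOn_id
        (fun x hx => Or.inl (ne_of_gt (lt_trans one_pos hx)))
    exact ContinuousOn.div (continuousOn_const.sub (hc _)) (continuousOn_const.sub (hc _))
      (fun x hx => (hden x hx).ne')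
  · intro x hx
    rw [interior_Ioi] at hx
    have hx1 : (1:ℝ) < x := hx
    have hx0 : (0:ℝ) < x := lt_trans one_pos hx1
    have hdne : 1 - x ^ (-f) ≠ 0 := (hden x hx1).ne'
    have hd1 : HasDerivAt (fun x : ℝ => 1 - x ^ (-e)) (0 - (-e * x ^ (-e - 1))) x :=
      (hasDerivAt_const x 1).sub (Real.hasDerivAt_rpow_const (Or.inl hx0.ne'))
    have hd2 : HasDerivAt (fun x : ℝ => 1 - x ^ (-f)) (0 - (-f * x ^ (-f - 1))) x :=
      (hasDerivAt_const x 1).sub (Real.hasDerivAt_rpow_const (Or.inl hx0.ne'))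
    have hg : HasDerivAt (fun x : ℝ => (1 - x ^ (-e)) / (1 - x ^ (-f)))
        (((0 - (-e * x ^ (-e - 1))) * (1 - x ^ (-f)) - (1 - x ^ (-e)) * (0 - (-f * x ^ (-f - 1))))
          / (1 - x ^ (-f)) ^ 2) x := hd1.div hd2 hdne
    rw [hg.deriv]
    have ht : (0:ℝ) < x ^ (-e - f - 1) := Real.rpow_pos_of_pos hx0 _
    have hA : x ^ (-e - 1) = x ^ (-e - f - 1) * x ^ f := by
      rw [← Real.rpow_add hx0]; congr 1; ring
    have hB : x ^ (-f - 1) = x ^ (-e - f - 1) * x ^ e := by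
      rw [← Real.rpow_add hx0]; congr 1; ring
    have hC : x ^ (-e - 1) * x ^ (-f) = x ^ (-e - f - 1) := by
      rw [← Real.rpow_add hx0]; congr 1; ring
    have hD : x ^ (-e) * x ^ (-f - 1) = x ^ (-e - f - 1) := by
      rw [← Real.rpow_add hx0]; congr 1; ring
    have hN : (0 - (-e * x ^ (-e - 1))) * (1 - x ^ (-f)) -
        (1 - x ^ (-e)) * (0 - (-f * x ^ (-f - 1))) =
        x ^ (-e - f - 1) * (e * (x ^ f - 1) - f * (x ^ e - 1)) := by
      linear_combination e * hA - e * hC - f * hB + f * hD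
    rw [hN]
    exact div_neg_of_neg_of_pos
      (mul_neg_of_pos_of_neg ht (by linarith [key x hx1]))
      (pow_pos (hden x hx1) 2)
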